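/- arXiv:2210.12626 — 2 statements merged into one kernel-verified Lean document; each statement's English description precedes it below -/
import Mathlib

section
/- Let σ : [0,1] → S_μ be a C¹ curve and φ : [0,1] → E solve the parallel transport equation φ'(t) + (φ(t), σ'(t))·Gσ(t)/‖Gσ(t)‖² = 0 with (φ(0), σ(0)) = 0. Then (φ(t), σ(t)) = 0 and ⟨φ(t), φ(t)⟩ = ⟨φ(0), φ(0)⟩ for all t ∈ [0,1]; in particular, parallel transport T: T_{σ(0)}S_μ → T_{σ(1)}S_μ, φ(0) ↦ φ(1), is a linear isometry for the E-norm. -/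
open scoped RealInnerProductSpace

/-- along a C¹ curve `σ : [0,1] → S_μ`, a solution `φ` of the parallel
transport equation `φ' + ((φ, σ')_H/‖Gσ‖²) Gσ = 0` with `(φ(0), σ(0))_H = 0` stays
`H`-orthogonal to `σ` and has constant `E`-inner square: `⟨φ(t), φ(t)⟩ = ⟨φ(0), φ(0)⟩`.
In particular, parallel transport `φ(0) ↦ φ(1)` is an isometry for the `E`-norm. -/
theorem parallel_transport_isometry
    {E H : Type*} [NormedAddCommGroup E] [InnerProductSpace ℝ E] [CompleteSpace E]
    [NormedAddCommGroup H] [InnerProductSpace ℝ H] [CompleteSpace H]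
    (ι : E →L[ℝ] H) (hι : Function.Injective ι) (hι1 : ‖(ι : E →L[ℝ] H)‖ ≤ 1)
    (μ : ℝ) (hμ : 0 < μ)
    (G : E →ₗ[ℝ] E) (hG : ∀ u h : E, ⟪ι u, ι h⟫ = ⟪G u, h⟫)
    (σ σ' φ φ' : ℝ → E)
    (hS : ∀ t ∈ Set.Icc (0:ℝ) 1, ‖ι (σ t)‖ ^ 2 = μ)
    (hdσ : ∀ t ∈ Set.Icc (0:ℝ) 1, HasDerivAt σ (σ' t) t)
    (hdφ : ∀ t ∈ Set.Icc (0:ℝ) 1, HasDerivAt φ (φ' t) t)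
    (hode : ∀ t ∈ Set.Icc (0:ℝ) 1,
      φ' t + (⟪ι (φ t), ι (σ' t)⟫ / ‖G (σ t)‖ ^ 2) • G (σ t) = 0)
    (h0 : ⟪ι (φ 0), ι (σ 0)⟫ = 0) :
    ∀ t ∈ Set.Icc (0:ℝ) 1,
      ⟪ι (φ t), ι (σ t)⟫ = 0 ∧ ⟪φ t, φ t⟫ = ⟪φ 0, φ 0⟫ := by
  have hGσ : ∀ t ∈ Set.Icc (0:ℝ) 1, ‖G (σ t)‖ ^ 2 ≠ 0 := by
    intro t ht h
    have h1 : ⟪G (σ t), σ t⟫ = μ := by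
      rw [← hG, real_inner_self_eq_norm_sq]; exact hS t ht
    have h2 : G (σ t) = 0 := by
      have := (pow_eq_zero_iff (n := 2) (by norm_num)).mp h
      simpa using this
    rw [h2] at h1; simp at h1; linarith
  have hφ' : ∀ t ∈ Set.Icc (0:ℝ) 1,
      φ' t = -((⟪ι (φ t), ι (σ' t)⟫ / ‖G (σ t)‖ ^ 2) • G (σ t)) :=
    fun t ht => eq_neg_of_add_eq_zero_left (hode t ht)
  set f : ℝ → ℝ := fun t => ⟪ι (φ t), ι (σ t)⟫ with hf
  have hdf : ∀ t ∈ Set.Icc (0:ℝ) 1, HasDerivAt f 0 t := by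
    intro t ht
    have hdιφ : HasDerivAt (fun s => ι (φ s)) (ι (φ' t)) t :=
      ι.hasFDerivAt.comp_hasDerivAt t (hdφ t ht)
    have hdισ : HasDerivAt (fun s => ι (σ s)) (ι (σ' t)) t :=
      ι.hasFDerivAt.comp_hasDerivAt t (hdσ t ht)
    have hd := hdιφ.inner ℝ hdισ
    have h2 : ⟪ι (G (σ t)), ι (σ t)⟫ = ‖G (σ t)‖ ^ 2 := by
      rw [real_inner_comm, hG, real_inner_self_eq_norm_sq]
    have key : ⟪ι (φ t), ι (σ' t)⟫ + ⟪ι (φ' t), ι (σ t)⟫ = 0 := by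
      rw [hφ' t ht, map_neg, map_smul, inner_neg_left, real_inner_smul_left, h2,
        div_mul_cancel₀ _ (hGσ t ht)]
      ring
    rw [key] at hd
    exact hd
  have hf0 : ∀ t ∈ Set.Icc (0:ℝ) 1, f t = 0 := by
    intro t ht
    have hc : ContinuousOn f (Set.Icc 0 1) :=
      fun s hs => (hdf s hs).continuousAt.continuousWithinAt
    have := constant_of_has_deriv_right_zero hc
      (fun x hx => (hdf x (Set.mem_Icc_of_Ico hx)).hasDerivWithinAt) t ht
    simpa [hf, h0] using this
  set g : ℝ → ℝ := fun t => ⟪φ t, φ t⟫ with hg'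
  have hdg : ∀ t ∈ Set.Icc (0:ℝ) 1, HasDerivAt g 0 t := by
    intro t ht
    have hd := (hdφ t ht).inner ℝ (hdφ t ht)
    have h3 : ⟪φ t, G (σ t)⟫ = 0 := by
      rw [real_inner_comm, ← hG, real_inner_comm]
      exact hf0 t ht
    have key : ⟪φ t, φ' t⟫ + ⟪φ' t, φ t⟫ = 0 := by
      rw [hφ' t ht, inner_neg_left, inner_neg_right, real_inner_smul_left,
        real_inner_smul_right, real_inner_comm (G (σ t)),
        (real_inner_comm (φ t) (G (σ t))).trans h3]
      ring
    rw [key] at hd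
    exact hd
  intro t ht
  refine ⟨hf0 t ht, ?_⟩
  have hc : ContinuousOn g (Set.Icc 0 1) :=
    fun s hs => (hdg s hs).continuousAt.continuousWithinAt
  exact constant_of_has_deriv_right_zero hc
    (fun x hx => (hdg x (Set.mem_Icc_of_Ico hx)).hasDerivWithinAt) t ht
end

section
/- Let u₀ ∈ S_μ ∩ B(0, R−1) with R > 1, δ₀ = min(1, √μ), u ∈ S_μ with ‖u−u₀‖ < δ₀, v = exp_{u₀}^{-1}(u), σ(t) = exp_{u₀}(tv), and let φ solve φ'(t) + (φ(t), σ'(t))Gσ(t)/‖Gσ(t)‖² = 0 with φ(0) = w₀ ∈ T_{u₀}S_μ. Then ‖φ(1) − w₀‖ ≤ C(R,μ)·|v|·‖w₀‖, where C(R,μ) = (1/μ)(R + (R−1)/√μ). -/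
open scoped RealInnerProductSpace Classical

/-- `sinc x = sin x / x`, with `sinc 0 = 1`. -/
noncomputable def sinc (x : ℝ) : ℝ := if x = 0 then 1 else Real.sin x / x

/-- The explicit inverse of the exponential map of the spray `F₁`. -/
noncomputable def expinv {E H : Type*} [NormedAddCommGroup E] [InnerProductSpace ℝ E]
    [NormedAddCommGroup H] [InnerProductSpace ℝ H]
    (ι : E →L[ℝ] H) (μ : ℝ) (u₀ u : E) : E :=
  (Real.arccos (⟪ι u, ι u₀⟫ / μ) / Real.sqrt (1 - (⟪ι u, ι u₀⟫ / μ) ^ 2)) •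
    (u - (⟪ι u, ι u₀⟫ / μ) • u₀)

lemma sinc_mul_eq (θ t : ℝ) (hθ : θ ≠ 0) : t * sinc (θ * t) = Real.sin (θ * t) / θ := by
  rcases eq_or_ne t 0 with rfl | ht
  · simp [sinc]
  · have h : θ * t ≠ 0 := mul_ne_zero hθ ht
    rw [sinc, if_neg h]
    field_simp

set_option maxHeartbeats 4000000 in
/-- Lemma on the displacement of parallel transport: with
`u₀ ∈ S_μ ∩ B(0,R−1)`, `R > 1`, `u ∈ S_μ`, `‖u − u₀‖ < δ₀ = min(1,√μ)`,
`v = exp_{u₀}⁻¹(u)`, `σ(t) = exp_{u₀}(tv) = cos(ωt)u₀ + t·sinc(ωt)v` with `ω = |v|/√μ`,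
and `φ` solving the parallel transport equation
`φ' + ((φ,σ')_H/‖Gσ‖²)Gσ = 0`, `φ(0) = w₀ ∈ T_{u₀}S_μ`, one has
`‖φ(1) − w₀‖ ≤ C(R,μ)·|v|·‖w₀‖` where `C(R,μ) = (1/μ)(R + (R−1)/√μ)`. -/
theorem parallel_transport_displacement
    {E H : Type*} [NormedAddCommGroup E] [InnerProductSpace ℝ E] [CompleteSpace E]
    [NormedAddCommGroup H] [InnerProductSpace ℝ H] [CompleteSpace H]
    (ι : E →L[ℝ] H) (hι : Function.Injective ι) (hι1 : ‖(ι : E →L[ℝ] H)‖ ≤ 1)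
    (μ : ℝ) (hμ : 0 < μ)
    (R : ℝ) (hR : 1 < R)
    (G : E →ₗ[ℝ] E) (hG : ∀ a h : E, ⟪ι a, ι h⟫ = ⟪G a, h⟫)
    (u₀ u w₀ : E) (hu₀S : ‖ι u₀‖ ^ 2 = μ) (hu₀R : ‖u₀‖ < R - 1)
    (huS : ‖ι u‖ ^ 2 = μ) (hdist : ‖u - u₀‖ < min 1 (Real.sqrt μ))
    (htan : ⟪ι u₀, ι w₀⟫ = 0)
    (σ σ' φ φ' : ℝ → E)
    (hσ : ∀ t : ℝ, σ t =
      Real.cos (‖ι (expinv ι μ u₀ u)‖ / Real.sqrt μ * t) • u₀ +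
        (t * sinc (‖ι (expinv ι μ u₀ u)‖ / Real.sqrt μ * t)) • expinv ι μ u₀ u)
    (hdσ : ∀ t : ℝ, HasDerivAt σ (σ' t) t)
    (hdφ : ∀ t ∈ Set.Icc (0:ℝ) 1, HasDerivAt φ (φ' t) t)
    (hode : ∀ t ∈ Set.Icc (0:ℝ) 1,
      φ' t + (⟪ι (φ t), ι (σ' t)⟫ / ‖G (σ t)‖ ^ 2) • G (σ t) = 0)
    (hφ0 : φ 0 = w₀) :
    ‖φ 1 - w₀‖ ≤ (1 / μ) * (R + (R - 1) / Real.sqrt μ) * ‖ι (expinv ι μ u₀ u)‖ * ‖w₀‖ := by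
  have hsμ : 0 < Real.sqrt μ := Real.sqrt_pos.mpr hμ
  have hμ' : μ ≠ 0 := ne_of_gt hμ
  set v : E := expinv ι μ u₀ u with hv
  clear_value v
  have hιle : ∀ x : E, ‖ι x‖ ≤ ‖x‖ := fun x =>
    le_trans (ι.le_opNorm x) (by nlinarith [norm_nonneg x])
  by_cases hv0 : ι v = 0
  · -- degenerate case : v = 0
    have hveq : v = 0 := hι (by simpa using hv0)
    have hσc : ∀ t : ℝ, σ t = u₀ := by
      intro t
      rw [hσ t]
      simp [hveq]
    have hσ'0 : ∀ t : ℝ, σ' t = 0 := by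
      intro t
      have h1 : HasDerivAt σ 0 t := by
        have h : σ = fun _ => u₀ := funext hσc
        rw [h]; exact hasDerivAt_const t u₀
      exact (hdσ t).unique h1
    have hφ'0 : ∀ t ∈ Set.Icc (0:ℝ) 1, φ' t = 0 := by
      intro t ht
      have h := hode t ht
      rw [hσ'0 t] at h
      simpa using h
    have h10 : φ 1 = φ 0 := by
      have h1 := norm_image_sub_le_of_norm_deriv_le_segment'
        (f := φ) (f' := φ') (a := 0) (b := 1) (C := 0)
        (fun x hx => (hdφ x hx).hasDerivWithinAt)
        (fun x hx => by rw [hφ'0 x (Set.mem_Icc_of_Ico hx)]; simp)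
        1 (Set.right_mem_Icc.mpr zero_le_one)
      have h2 : ‖φ 1 - φ 0‖ ≤ 0 := by simpa using h1
      exact sub_eq_zero.mp (norm_le_zero_iff.mp h2)
    rw [h10, hφ0, sub_self, norm_zero]
    simp [hv0]
  · -- main case
    set β : ℝ := ⟪ι u, ι u₀⟫ / μ with hβ
    clear_value β
    have hvdef : v = (Real.arccos β / Real.sqrt (1 - β ^ 2)) • (u - β • u₀) := by
      rw [hv, expinv, ← hβ]
    have hinner : ⟪ι u, ι u₀⟫ = β * μ := by rw [hβ]; field_simp
    have hnu₀ : ‖ι u₀‖ = Real.sqrt μ := by rw [← hu₀S, Real.sqrt_sq (norm_nonneg _)]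
    have hnu : ‖ι u‖ = Real.sqrt μ := by rw [← huS, Real.sqrt_sq (norm_nonneg _)]
    have hβ1 : β ≤ 1 := by
      have h := real_inner_le_norm (ι u) (ι u₀)
      rw [hnu, hnu₀, Real.mul_self_sqrt hμ.le] at h
      rw [hβ]; exact div_le_one_of_le₀ h hμ.le
    have hdsq : ‖ι (u - u₀)‖ ^ 2 = 2*μ - 2*(β*μ) := by
      rw [map_sub, norm_sub_sq_real, hinner, hu₀S, huS]; ring
    have hdle : ‖ι (u - u₀)‖ ≤ ‖u - u₀‖ := hιle _
    obtain ⟨hd1, hd2⟩ := lt_min_iff.mp hdist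
    have h1bA : 1 - β < 1/2 := by
      nlinarith [Real.mul_self_sqrt hμ.le, norm_nonneg (ι (u - u₀)), norm_nonneg (u - u₀)]
    have hβlt1 : β < 1 := by
      rcases lt_or_eq_of_le hβ1 with h | h
      · exact h
      · exfalso
        apply hv0
        rw [h] at hvdef
        simp [Real.arccos_one] at hvdef
        rw [hvdef]; simp
    set θ := Real.arccos β with hθdef
    clear_value θ
    have hθpos : 0 < θ := by rw [hθdef]; exact Real.arccos_pos.mpr hβlt1
    have hθlt : θ < Real.pi/2 := by rw [hθdef]; exact Real.arccos_lt_pi_div_two.mpr (by linarith)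
    have hsinθ : Real.sin θ = Real.sqrt (1 - β^2) := by rw [hθdef]; exact Real.sin_arccos β
    have hsinpos : 0 < Real.sin θ :=
      Real.sin_pos_of_pos_of_lt_pi hθpos (by linarith [Real.pi_pos])
    have hvdef2 : v = (θ / Real.sin θ) • (u - β • u₀) := by rw [hvdef, hsinθ]
    have hu₀sq : ⟪ι u₀, ι u₀⟫ = μ := by rw [real_inner_self_eq_norm_sq, hu₀S]
    have horth : ⟪ι u₀, ι v⟫ = 0 := by
      have h : ⟪ι u₀, ι v⟫ = (θ / Real.sin θ) * (⟪ι u, ι u₀⟫ - β * μ) := by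
        rw [hvdef2, map_smul, map_sub, map_smul, real_inner_smul_right, inner_sub_right,
          real_inner_smul_right, hu₀sq, real_inner_comm (ι u₀) (ι u)]
      rw [h, hinner]; ring
    have hb2 : 0 < 1 - β^2 := by nlinarith
    have hw1 : ‖ι (u - β • u₀)‖^2 = μ * (1 - β^2) := by
      rw [map_sub, map_smul, norm_sub_sq_real, real_inner_smul_right, hinner, huS,
        norm_smul, Real.norm_eq_abs, mul_pow, sq_abs, hu₀S]
      ring
    have hw2 : ‖ι (u - β • u₀)‖ = Real.sqrt μ * Real.sin θ := by
      rw [← Real.sqrt_sq (norm_nonneg (ι (u - β • u₀))), hw1, Real.sqrt_mul hμ.le, hsinθ]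
    have hvnorm : ‖ι v‖ = θ * Real.sqrt μ := by
      rw [hvdef2, map_smul, norm_smul, hw2, Real.norm_eq_abs,
        abs_of_nonneg (div_nonneg hθpos.le hsinpos.le)]
      field_simp
    have hωθ : ‖ι v‖ / Real.sqrt μ = θ := by
      rw [hvnorm, mul_div_assoc, div_self hsμ.ne', mul_one]
    have hσeq : ∀ t : ℝ, σ t = Real.cos (θ*t) • u₀ + (Real.sin (θ*t)/θ) • v := by
      intro t
      rw [hσ t, hωθ, sinc_mul_eq θ t hθpos.ne']
    have hσ0 : σ 0 = u₀ := by rw [hσeq 0]; simp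
    have hσ'eq : ∀ t : ℝ, σ' t = (-(θ * Real.sin (θ*t))) • u₀ + Real.cos (θ*t) • v := by
      intro t
      have hlin : HasDerivAt (fun s : ℝ => θ * s) θ t := by
        simpa using (hasDerivAt_id t).const_mul θ
      have h1 : HasDerivAt (fun s => Real.cos (θ*s)) (-Real.sin (θ*t) * θ) t :=
        (Real.hasDerivAt_cos (θ*t)).comp t hlin
      have h2 : HasDerivAt (fun s => Real.sin (θ*s)) (Real.cos (θ*t) * θ) t :=
        (Real.hasDerivAt_sin (θ*t)).comp t hlin
      have h3 : HasDerivAt σ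
          ((-Real.sin (θ*t) * θ) • u₀ + ((Real.cos (θ*t) * θ)/θ) • v) t := by
        rw [funext hσeq]
        exact (h1.smul_const u₀).add ((h2.div_const θ).smul_const v)
      rw [(hdσ t).unique h3]
      have h4 : (Real.cos (θ*t) * θ)/θ = Real.cos (θ*t) := by field_simp
      rw [h4]
      congr 1
      congr 1
      ring
    have hσnorm : ∀ t : ℝ, ‖ι (σ t)‖^2 = μ := by
      intro t
      rw [hσeq t, map_add, map_smul, map_smul, norm_add_sq_real,
        real_inner_smul_left, real_inner_smul_right, horth,
        norm_smul, norm_smul, Real.norm_eq_abs, Real.norm_eq_abs,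
        mul_pow, mul_pow, sq_abs, sq_abs, hu₀S, hvnorm]
      have h1 := Real.sin_sq_add_cos_sq (θ*t)
      have h2 := Real.sq_sqrt hμ.le
      have h3 : (Real.sin (θ*t)/θ)^2 * θ^2 = Real.sin (θ*t)^2 := by
        rw [← mul_pow, div_mul_cancel₀ _ hθpos.ne']
      linear_combination (Real.sqrt μ^2) * h3 + (Real.sin (θ*t)^2) * h2 + μ * h1
    have hσ'norm : ∀ t : ℝ, ‖ι (σ' t)‖ = ‖ι v‖ := by
      intro t
      have hsq : ‖ι (σ' t)‖^2 = ‖ι v‖^2 := by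
        rw [hσ'eq t, map_add, map_smul, map_smul, norm_add_sq_real,
          real_inner_smul_left, real_inner_smul_right, horth,
          norm_smul, norm_smul, Real.norm_eq_abs, Real.norm_eq_abs,
          mul_pow, mul_pow, sq_abs, sq_abs, hu₀S, hvnorm]
        have h1 := Real.sin_sq_add_cos_sq (θ*t)
        have h2 := Real.sq_sqrt hμ.le
        linear_combination (Real.cos (θ*t)^2*θ^2 - θ^2) * h2 + θ^2*μ*h1
      rw [← Real.sqrt_sq (norm_nonneg (ι (σ' t))), hsq, Real.sqrt_sq (norm_nonneg _)]
    have h1bs : (1-β) * Real.sqrt μ ≤ 1 := by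
      nlinarith [hdsq, hdle, hd1, hd2, norm_nonneg (ι (u - u₀)), norm_nonneg (u - u₀),
        Real.mul_self_sqrt hμ.le, Real.sqrt_nonneg μ]
    have hσbd : ∀ t ∈ Set.Icc (0:ℝ) 1, ‖σ t‖ ≤ R + (R-1)/Real.sqrt μ := by
      intro t ht
      obtain ⟨ht0, ht1⟩ := ht
      have hθt0 : 0 ≤ θ * t := mul_nonneg hθpos.le ht0
      have hθtle : θ * t ≤ θ := by nlinarith
      have hsc0 : 0 ≤ Real.sin (θ*t) :=
        Real.sin_nonneg_of_nonneg_of_le_pi hθt0 (by nlinarith [Real.pi_pos])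
      have hsc1 : Real.sin (θ*t) ≤ Real.sin θ :=
        Real.sin_le_sin_of_le_of_le_pi_div_two (by nlinarith [Real.pi_pos]) hθlt.le hθtle
      have hc0 : 0 ≤ Real.sin (θ*t) / Real.sin θ := div_nonneg hsc0 hsinpos.le
      have hc1 : Real.sin (θ*t) / Real.sin θ ≤ 1 := div_le_one_of_le₀ hsc1 hsinpos.le
      have hσt2 : σ t = Real.cos (θ*t) • u₀ +
          (Real.sin (θ*t) / Real.sin θ) • ((u - u₀) + (1-β) • u₀) := by
        rw [hσeq t, hvdef2, smul_smul]
        have h₁ : Real.sin (θ*t)/θ * (θ/Real.sin θ) = Real.sin (θ*t) / Real.sin θ := by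
          field_simp
        rw [h₁]
        congr 1
        congr 1
        module
      rw [hσt2]
      have hb1 : ‖Real.cos (θ*t) • u₀‖ ≤ R - 1 := by
        rw [norm_smul, Real.norm_eq_abs]
        nlinarith [Real.abs_cos_le_one (θ*t), norm_nonneg u₀, abs_nonneg (Real.cos (θ*t))]
      have hb2' : ‖(u - u₀) + (1-β) • u₀‖ ≤ ‖u-u₀‖ + (1-β)*‖u₀‖ := by
        refine (norm_add_le _ _).trans ?_
        rw [norm_smul, Real.norm_eq_abs, abs_of_nonneg (by linarith : (0:ℝ) ≤ 1-β)]
      have h5 : 1 - β ≤ 1/Real.sqrt μ := by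
        rw [le_div_iff₀ hsμ]; exact h1bs
      have h4 : (1-β)*‖u₀‖ ≤ (R-1)/Real.sqrt μ := by
        calc (1-β)*‖u₀‖ ≤ (1/Real.sqrt μ)*(R-1) :=
              mul_le_mul h5 hu₀R.le (norm_nonneg _) (by positivity)
          _ = (R-1)/Real.sqrt μ := by ring
      have hb2 : ‖(Real.sin (θ*t) / Real.sin θ) • ((u - u₀) + (1-β) • u₀)‖ ≤
          1 + (R-1)/Real.sqrt μ := by
        rw [norm_smul, Real.norm_eq_abs, abs_of_nonneg hc0]
        calc (Real.sin (θ*t) / Real.sin θ) * ‖(u - u₀) + (1-β) • u₀‖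
            ≤ 1 * (‖u-u₀‖ + (1-β)*‖u₀‖) :=
              mul_le_mul hc1 hb2' (norm_nonneg _) (by norm_num)
          _ ≤ 1 + (R-1)/Real.sqrt μ := by rw [one_mul]; linarith
      calc ‖Real.cos (θ*t) • u₀ + (Real.sin (θ*t) / Real.sin θ) • ((u - u₀) + (1-β) • u₀)‖
          ≤ ‖Real.cos (θ*t) • u₀‖ + ‖(Real.sin (θ*t) / Real.sin θ) • ((u - u₀) + (1-β) • u₀)‖ :=
            norm_add_le _ _
        _ ≤ (R-1) + (1 + (R-1)/Real.sqrt μ) := add_le_add hb1 hb2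
        _ = R + (R-1)/Real.sqrt μ := by ring
    have hGσ : ∀ t : ℝ, μ ≤ ‖G (σ t)‖ * ‖σ t‖ := by
      intro t
      have h1 : ⟪G (σ t), σ t⟫ = μ := by
        rw [← hG, real_inner_self_eq_norm_sq, hσnorm t]
      calc μ = ⟪G (σ t), σ t⟫ := h1.symm
        _ ≤ ‖G (σ t)‖ * ‖σ t‖ := real_inner_le_norm _ _
    have hGpos : ∀ t : ℝ, 0 < ‖G (σ t)‖ := by
      intro t
      rcases (norm_nonneg (G (σ t))).lt_or_eq with h | h
      · exact h
      · exfalso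
        have h2 := hGσ t
        rw [← h, zero_mul] at h2
        linarith
    have hφ'for : ∀ t ∈ Set.Icc (0:ℝ) 1,
        φ' t = -((⟪ι (φ t), ι (σ' t)⟫ / ‖G (σ t)‖^2) • G (σ t)) :=
      fun t ht => eq_neg_of_add_eq_zero_left (hode t ht)
    have hιder : ∀ (f f' : ℝ → E) (t : ℝ), HasDerivAt f (f' t) t →
        HasDerivAt (fun s => ι (f s)) (ι (f' t)) t :=
      fun f f' t h => ι.hasFDerivAt.comp_hasDerivAt t h
    -- conserved quantity 1 : tangency
    have hf : ∀ t ∈ Set.Icc (0:ℝ) 1, ⟪ι (σ t), ι (φ t)⟫ = 0 := by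
      have key : ∀ t ∈ Set.Icc (0:ℝ) 1,
          (fun s => ⟪ι (σ s), ι (φ s)⟫) t = (fun s => ⟪ι (σ s), ι (φ s)⟫) 0 := by
        apply constant_of_has_deriv_right_zero
        · intro t ht
          exact ((hιder σ σ' t (hdσ t)).inner ℝ
            (hιder φ φ' t (hdφ t ht))).continuousAt.continuousWithinAt
        · intro t ht
          have ht' := Set.mem_Icc_of_Ico ht
          have h1 := (hιder σ σ' t (hdσ t)).inner ℝ (hιder φ φ' t (hdφ t ht'))
          have h2 : ⟪ι (σ t), ι (φ' t)⟫ + ⟪ι (σ' t), ι (φ t)⟫ = 0 := by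
            rw [hφ'for t ht', map_neg, map_smul, inner_neg_right, real_inner_smul_right]
            have hGG : ⟪ι (σ t), ι (G (σ t))⟫ = ‖G (σ t)‖^2 := by
              rw [hG (σ t) (G (σ t))]
              exact real_inner_self_eq_norm_sq _
            rw [hGG]
            have hne : ‖G (σ t)‖^2 ≠ 0 := pow_ne_zero 2 (hGpos t).ne'
            rw [div_mul_cancel₀ _ hne, real_inner_comm (ι (σ' t)) (ι (φ t))]
            ring
          rw [h2] at h1
          exact h1.hasDerivWithinAt
      intro t ht
      have h := key t ht
      simp only at h
      rw [h, hσ0, hφ0, htan]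
    -- conserved quantity 2 : E-norm of φ
    have hφnorm : ∀ t ∈ Set.Icc (0:ℝ) 1, ‖φ t‖ = ‖w₀‖ := by
      have key : ∀ t ∈ Set.Icc (0:ℝ) 1,
          (fun s => ⟪φ s, φ s⟫) t = (fun s => ⟪φ s, φ s⟫) 0 := by
        apply constant_of_has_deriv_right_zero
        · intro t ht
          exact ((hdφ t ht).inner ℝ (hdφ t ht)).continuousAt.continuousWithinAt
        · intro t ht
          have ht' := Set.mem_Icc_of_Ico ht
          have h1 := (hdφ t ht').inner ℝ (hdφ t ht')
          have h3 : ⟪φ t, G (σ t)⟫ = 0 := by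
            rw [real_inner_comm, ← hG]
            exact hf t ht'
          have h4 : ⟪G (σ t), φ t⟫ = 0 := by
            rw [← hG]
            exact hf t ht'
          have h2 : ⟪φ t, φ' t⟫ + ⟪φ' t, φ t⟫ = 0 := by
            rw [hφ'for t ht', inner_neg_right, inner_neg_left,
              real_inner_smul_right, real_inner_smul_left, h3, h4]
            ring
          rw [h2] at h1
          exact h1.hasDerivWithinAt
      intro t ht
      have h := key t ht
      simp only at h
      rw [hφ0] at h
      have h1 : ‖φ t‖^2 = ‖w₀‖^2 := by
        rw [← real_inner_self_eq_norm_sq, ← real_inner_self_eq_norm_sq, h]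
      rw [← Real.sqrt_sq (norm_nonneg (φ t)), h1, Real.sqrt_sq (norm_nonneg w₀)]
    -- bound on the derivative
    have hφ'bd : ∀ t ∈ Set.Icc (0:ℝ) 1,
        ‖φ' t‖ ≤ (1/μ) * (R + (R-1)/Real.sqrt μ) * ‖ι v‖ * ‖w₀‖ := by
      intro t ht
      have hGp := hGpos t
      have h1 : ‖φ' t‖ = |⟪ι (φ t), ι (σ' t)⟫| / ‖G (σ t)‖ := by
        have habs : |⟪ι (φ t), ι (σ' t)⟫ / ‖G (σ t)‖^2| * ‖G (σ t)‖ =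
            |⟪ι (φ t), ι (σ' t)⟫| / ‖G (σ t)‖ := by
          rw [abs_div, abs_of_nonneg (sq_nonneg (‖G (σ t)‖))]
          field_simp
        rw [hφ'for t ht, norm_neg, norm_smul, Real.norm_eq_abs, habs]
      have h2 : |⟪ι (φ t), ι (σ' t)⟫| ≤ ‖w₀‖ * ‖ι v‖ := by
        calc |⟪ι (φ t), ι (σ' t)⟫| ≤ ‖ι (φ t)‖ * ‖ι (σ' t)‖ := abs_real_inner_le_norm _ _
          _ = ‖ι (φ t)‖ * ‖ι v‖ := by rw [hσ'norm t]
          _ ≤ ‖φ t‖ * ‖ι v‖ := mul_le_mul_of_nonneg_right (hιle _) (norm_nonneg _)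
          _ = ‖w₀‖ * ‖ι v‖ := by rw [hφnorm t ht]
      have h3 : 1/‖G (σ t)‖ ≤ ‖σ t‖/μ := by
        rw [div_le_div_iff₀ hGp hμ]
        nlinarith [hGσ t]
      calc ‖φ' t‖ = |⟪ι (φ t), ι (σ' t)⟫| * (1/‖G (σ t)‖) := by rw [h1]; ring
        _ ≤ (‖w₀‖ * ‖ι v‖) * (‖σ t‖/μ) :=
            mul_le_mul h2 h3 (one_div_nonneg.mpr (norm_nonneg _))
              (mul_nonneg (norm_nonneg _) (norm_nonneg _))
        _ ≤ (‖w₀‖ * ‖ι v‖) * ((R + (R-1)/Real.sqrt μ)/μ) := by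
            have := hσbd t ht
            gcongr
        _ = (1/μ) * (R + (R-1)/Real.sqrt μ) * ‖ι v‖ * ‖w₀‖ := by ring
    have hfinal := norm_image_sub_le_of_norm_deriv_le_segment'
      (f := φ) (f' := φ') (a := 0) (b := 1)
      (fun x hx => (hdφ x hx).hasDerivWithinAt)
      (fun x hx => hφ'bd x (Set.mem_Icc_of_Ico hx))
      1 (Set.right_mem_Icc.mpr zero_le_one)
    rw [hφ0] at hfinal
    calc ‖φ 1 - w₀‖ ≤ (1/μ) * (R + (R-1)/Real.sqrt μ) * ‖ι v‖ * ‖w₀‖ * (1 - 0) := hfinal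
      _ = (1 / μ) * (R + (R - 1) / Real.sqrt μ) * ‖ι v‖ * ‖w₀‖ := by ring
end
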